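/- For the path graph P_n on n ≥ 4 vertices, the harmonic index of its total graph satisfies H(T(P_n)) = n − 269/420. -/

import Mathlib

open scoped Classical

/-- The total graph `T(G)` of a simple graph `G`: its vertex set is `V(G) ∪ E(G)`,
and two vertices of `T(G)` are adjacent iff the corresponding elements of `G`
are adjacent vertices, adjacent (distinct, sharing an endpoint) edges, or an
incident vertex–edge pair. -/
def SimpleGraph.totalGraph {V : Type*} (G : SimpleGraph V) :
    SimpleGraph (V ⊕ G.edgeSet) where
  Adj x y :=
    match x, y with
    | Sum.inl u, Sum.inl v => G.Adj u v
    | Sum.inl u, Sum.inr e => u ∈ (e : Sym2 V)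
    | Sum.inr e, Sum.inl u => u ∈ (e : Sym2 V)
    | Sum.inr e, Sum.inr f => e ≠ f ∧ ∃ v, v ∈ (e : Sym2 V) ∧ v ∈ (f : Sym2 V)
  symm := by
    refine ⟨?_⟩
    rintro (u | e) (v | f) h
    · exact h.symm
    · exact h
    · exact h
    · exact ⟨h.1.symm, h.2.imp fun v hv => ⟨hv.2, hv.1⟩⟩
  loopless := by
    refine ⟨?_⟩
    rintro (u | e) h
    · exact G.irrefl h
    · exact h.1 rfl

/-- The harmonic index `H(G) = ∑_{uv ∈ E(G)} 2 / (deg u + deg v)`. -/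
noncomputable def SimpleGraph.harmonicIndex {V : Type*} [Fintype V] (G : SimpleGraph V) : ℝ :=
  ∑ e ∈ G.edgeFinset,
    Sym2.lift ⟨fun u v => 2 / ((G.degree u : ℝ) + (G.degree v : ℝ)),
      fun u v => by simp [add_comm]⟩ e

open SimpleGraph Finset Sum
namespace TPaux

variable {V : Type*} (G : SimpleGraph V)

@[simp] lemma tg_adj_inl_inl (u v : V) :
    G.totalGraph.Adj (inl u) (inl v) ↔ G.Adj u v := Iff.rfl
@[simp] lemma tg_adj_inl_inr (u : V) (e : G.edgeSet) :
    G.totalGraph.Adj (inl u) (inr e) ↔ u ∈ (e : Sym2 V) := Iff.rfl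
@[simp] lemma tg_adj_inr_inl (u : V) (e : G.edgeSet) :
    G.totalGraph.Adj (inr e) (inl u) ↔ u ∈ (e : Sym2 V) := Iff.rfl
@[simp] lemma tg_adj_inr_inr (e f : G.edgeSet) :
    G.totalGraph.Adj (inr e) (inr f) ↔
      e ≠ f ∧ ∃ v, v ∈ (e : Sym2 V) ∧ v ∈ (f : Sym2 V) := Iff.rfl


def vt (m i : ℕ) : Fin (m+4) := ⟨i % (m+4), Nat.mod_lt _ (by omega)⟩

lemma vt_val {m : ℕ} (i : ℕ) (h : i < m+4) : (vt m i).val = i := Nat.mod_eq_of_lt h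

lemma edmem (m i : ℕ) (h : i + 1 < m + 4) :
    s(vt m i, vt m (i+1)) ∈ (pathGraph (m+4)).edgeSet := by
  rw [SimpleGraph.mem_edgeSet, SimpleGraph.pathGraph_adj]
  left
  rw [vt_val i (by omega), vt_val (i+1) h]

def ed (m i : ℕ) : (pathGraph (m+4)).edgeSet :=
  if h : i + 1 < m + 4 then ⟨s(vt m i, vt m (i+1)), edmem m i h⟩
  else ⟨s(vt m 0, vt m 1), edmem m 0 (by omega)⟩

lemma ed_coe {m : ℕ} (i : ℕ) (h : i + 1 < m + 4) :
    (ed m i : Sym2 (Fin (m+4))) = s(vt m i, vt m (i+1)) := by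
  simp [ed, h]

lemma mem_ed {m : ℕ} (i : ℕ) (h : i + 1 < m + 4) (u : Fin (m+4)) :
    u ∈ (ed m i : Sym2 (Fin (m+4))) ↔ u.val = i ∨ u.val = i + 1 := by
  rw [ed_coe i h, Sym2.mem_iff]
  constructor
  · rintro (rfl | rfl)
    · left; exact vt_val i (by omega)
    · right; exact vt_val (i+1) h
  · rintro (hv | hv)
    · left; exact Fin.ext (by rw [vt_val i (by omega)]; exact hv)
    · right; exact Fin.ext (by rw [vt_val (i+1) h]; exact hv)

lemma ed_inj {m : ℕ} {i j : ℕ} (hi : i + 1 < m + 4) (hj : j + 1 < m + 4) :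
    ed m i = ed m j ↔ i = j := by
  constructor
  · intro h
    have h2 : (ed m i : Sym2 (Fin (m+4))) = ed m j := by rw [h]
    rw [ed_coe i hi, ed_coe j hj, Sym2.eq_iff] at h2
    have hv : ∀ a b : ℕ, a < m+4 → b < m+4 → vt m a = vt m b → a = b := by
      intro a b ha hb hab
      have := congrArg Fin.val hab
      rwa [vt_val a ha, vt_val b hb] at this
    rcases h2 with ⟨h3, _⟩ | ⟨h3, h4⟩
    · exact hv i j (by omega) (by omega) h3
    · have := hv i (j+1) (by omega) hj h3
      have := hv (i+1) j hi (by omega) h4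
      omega
  · rintro rfl; rfl

lemma ed_surj {m : ℕ} (e : (pathGraph (m+4)).edgeSet) :
    ∃ i, i + 1 < m + 4 ∧ e = ed m i := by
  obtain ⟨s, hs⟩ := e
  induction s using Sym2.ind with
  | _ u v =>
    rw [SimpleGraph.mem_edgeSet, SimpleGraph.pathGraph_adj] at hs
    rcases hs with h | h
    · refine ⟨u.val, by omega, ?_⟩
      apply Subtype.ext
      rw [ed_coe u.val (by omega)]
      show s(u, v) = _
      rw [Sym2.eq_iff]
      left
      constructor <;> apply Fin.ext
      · rw [vt_val u.val (by omega)]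
      · rw [vt_val (u.val+1) (by omega)]; omega
    · refine ⟨v.val, by omega, ?_⟩
      apply Subtype.ext
      rw [ed_coe v.val (by omega)]
      show s(u, v) = _
      rw [Sym2.eq_iff]
      right
      constructor <;> apply Fin.ext
      · rw [vt_val (v.val+1) (by omega)]; omega
      · rw [vt_val v.val (by omega)]


lemma ed_adj {m : ℕ} {i j : ℕ} (hi : i + 1 < m + 4) (hj : j + 1 < m + 4) :
    (pathGraph (m+4)).totalGraph.Adj (inr (ed m i)) (inr (ed m j)) ↔
      i ≠ j ∧ j ≤ i + 1 ∧ i ≤ j + 1 := by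
  rw [tg_adj_inr_inr]
  constructor
  · rintro ⟨hne, v, hv1, hv2⟩
    rw [mem_ed i hi] at hv1
    rw [mem_ed j hj] at hv2
    have : i ≠ j := fun h => hne (by rw [h])
    omega
  · rintro ⟨hne, h1, h2⟩
    refine ⟨fun h => hne ((ed_inj hi hj).mp h), vt m (max i j), ?_, ?_⟩
    · rw [mem_ed i hi, vt_val _ (by omega)]; omega
    · rw [mem_ed j hj, vt_val _ (by omega)]; omega

lemma vt_eq_vt {m : ℕ} {a b : ℕ} (ha : a < m + 4) (hb : b < m + 4) :
    vt m a = vt m b ↔ a = b := by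
  constructor
  · intro h
    have := congrArg Fin.val h
    rwa [vt_val a ha, vt_val b hb] at this
  · rintro rfl; rfl

lemma eq_vt_iff {m : ℕ} (v : Fin (m + 4)) {k : ℕ} (h : k < m + 4) :
    v = vt m k ↔ v.val = k := by
  rw [Fin.ext_iff, vt_val k h]

lemma deg_vt {m : ℕ} (u : Fin (m+4)) :
    (pathGraph (m+4)).totalGraph.degree (inl u) =
      if u.val = 0 ∨ u.val = m + 3 then 2 else 4 := by
  have hu4 : u.val < m + 4 := u.isLt
  rw [← card_neighborFinset_eq_degree]
  by_cases h0 : u.val = 0 ∨ u.val = m + 3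
  · rw [if_pos h0]
    obtain ⟨a, b, ha, hb1, hab⟩ : ∃ a b : ℕ, a < m + 4 ∧ b + 1 < m + 4 ∧
        (∀ k : ℕ, k < m + 4 → ((u.val + 1 = k ∨ k + 1 = u.val) ↔ k = a)) ∧
        (∀ k : ℕ, k + 1 < m + 4 → ((u.val = k ∨ u.val = k + 1) ↔ k = b)) := by
      rcases h0 with h0 | h0
      · exact ⟨1, 0, by omega, by omega, fun k hk => by omega,
          fun k hk => by omega⟩
      · exact ⟨m + 2, m + 2, by omega, by omega, fun k hk => by omega,
          fun k hk => by omega⟩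
    obtain ⟨hab1, hab2⟩ := hab
    have hnb : (pathGraph (m+4)).totalGraph.neighborFinset (inl u) =
        {inl (vt m a), inr (ed m b)} := by
      ext x
      rw [mem_neighborFinset]
      rcases x with v | e
      · simp only [tg_adj_inl_inl, pathGraph_adj, mem_insert, mem_singleton,
          Sum.inl.injEq, reduceCtorEq, or_false]
        rw [eq_vt_iff v ha]
        exact hab1 v.val v.isLt
      · obtain ⟨i, hi, rfl⟩ := ed_surj e
        simp only [tg_adj_inl_inr, mem_ed i hi, mem_insert, mem_singleton,
          Sum.inr.injEq, reduceCtorEq, false_or]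
        rw [ed_inj hi hb1]
        exact hab2 i hi
    rw [hnb, card_insert_of_notMem (by simp), card_singleton]
  · rw [if_neg h0]
    push_neg at h0
    obtain ⟨h1, h2⟩ := h0
    have hnb : (pathGraph (m+4)).totalGraph.neighborFinset (inl u) =
        {inl (vt m (u.val - 1)), inl (vt m (u.val + 1)),
         inr (ed m (u.val - 1)), inr (ed m u.val)} := by
      ext x
      rw [mem_neighborFinset]
      rcases x with v | e
      · simp only [tg_adj_inl_inl, pathGraph_adj, mem_insert, mem_singleton,
          Sum.inl.injEq, reduceCtorEq, or_false]
        rw [eq_vt_iff v (by omega), eq_vt_iff v (by omega)]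
        omega
      · obtain ⟨i, hi, rfl⟩ := ed_surj e
        simp only [tg_adj_inl_inr, mem_ed i hi, mem_insert, mem_singleton,
          Sum.inr.injEq, reduceCtorEq, false_or]
        rw [ed_inj hi (by omega), ed_inj hi (by omega)]
        omega
    rw [hnb]
    have d1 : vt m (u.val - 1) ≠ vt m (u.val + 1) := by
      rw [Ne, vt_eq_vt (by omega) (by omega)]; omega
    have d2 : ed m (u.val - 1) ≠ ed m u.val := by
      rw [Ne, ed_inj (by omega) (by omega)]; omega
    rw [card_insert_of_notMem (by simp [d1]),
        card_insert_of_notMem (by simp),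
        card_insert_of_notMem (by simp [d2]), card_singleton]

lemma deg_ed {m : ℕ} {i : ℕ} (hi : i + 1 < m + 4) :
    (pathGraph (m+4)).totalGraph.degree (inr (ed m i)) =
      if i = 0 ∨ i = m + 2 then 3 else 4 := by
  rw [← card_neighborFinset_eq_degree]
  by_cases h0 : i = 0 ∨ i = m + 2
  · rw [if_pos h0]
    obtain ⟨b, hb1, hb2⟩ : ∃ b : ℕ, b + 1 < m + 4 ∧
        (∀ j : ℕ, j + 1 < m + 4 → ((j ≠ i ∧ i ≤ j + 1 ∧ j ≤ i + 1) ↔ j = b)) := by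
      rcases h0 with h0 | h0
      · exact ⟨1, by omega, fun j hj => by omega⟩
      · exact ⟨m + 1, by omega, fun j hj => by omega⟩
    have hnb : (pathGraph (m+4)).totalGraph.neighborFinset (inr (ed m i)) =
        {inl (vt m i), inl (vt m (i + 1)), inr (ed m b)} := by
      ext x
      rw [mem_neighborFinset]
      rcases x with v | e
      · simp only [tg_adj_inr_inl, mem_ed i hi, mem_insert, mem_singleton,
          Sum.inl.injEq, reduceCtorEq, or_false]
        rw [eq_vt_iff v (by omega), eq_vt_iff v hi]
      · obtain ⟨j, hj, rfl⟩ := ed_surj e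
        rw [SimpleGraph.adj_comm, ed_adj hj hi]
        simp only [mem_insert, mem_singleton, Sum.inr.injEq, reduceCtorEq,
          false_or]
        rw [ed_inj hj hb1]
        exact hb2 j hj
    rw [hnb]
    have d1 : vt m i ≠ vt m (i + 1) := by
      rw [Ne, vt_eq_vt (by omega) hi]; omega
    rw [card_insert_of_notMem (by simp [d1]),
        card_insert_of_notMem (by simp), card_singleton]
  · rw [if_neg h0]
    push_neg at h0
    obtain ⟨h1, h2⟩ := h0
    have hnb : (pathGraph (m+4)).totalGraph.neighborFinset (inr (ed m i)) =
        {inl (vt m i), inl (vt m (i + 1)),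
         inr (ed m (i - 1)), inr (ed m (i + 1))} := by
      ext x
      rw [mem_neighborFinset]
      rcases x with v | e
      · simp only [tg_adj_inr_inl, mem_ed i hi, mem_insert, mem_singleton,
          Sum.inl.injEq, reduceCtorEq, or_false]
        rw [eq_vt_iff v (by omega), eq_vt_iff v hi]
      · obtain ⟨j, hj, rfl⟩ := ed_surj e
        rw [SimpleGraph.adj_comm, ed_adj hj hi]
        simp only [mem_insert, mem_singleton, Sum.inr.injEq, reduceCtorEq,
          false_or]
        rw [ed_inj hj (by omega), ed_inj hj (by omega)]
        omega
    rw [hnb]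
    have d1 : vt m i ≠ vt m (i + 1) := by
      rw [Ne, vt_eq_vt (by omega) hi]; omega
    have d2 : ed m (i - 1) ≠ ed m (i + 1) := by
      rw [Ne, ed_inj (by omega) (by omega)]; omega
    rw [card_insert_of_notMem (by simp [d1]),
        card_insert_of_notMem (by simp),
        card_insert_of_notMem (by simp [d2]), card_singleton]

/-! ### Edge decomposition of the total graph -/

def S (m : ℕ) : Finset (ℕ × ℕ) :=
  (Finset.range (m+3) ×ˢ Finset.range 3) ∪ (Finset.range (m+2) ×ˢ {3})

def F (m : ℕ) (p : ℕ × ℕ) : Sym2 (Fin (m+4) ⊕ (pathGraph (m+4)).edgeSet) :=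
  if p.2 = 0 then s(inl (vt m p.1), inl (vt m (p.1+1)))
  else if p.2 = 1 then s(inl (vt m p.1), inr (ed m p.1))
  else if p.2 = 2 then s(inl (vt m (p.1+1)), inr (ed m p.1))
  else s(inr (ed m p.1), inr (ed m (p.1+1)))

lemma mem_S {m : ℕ} {p : ℕ × ℕ} :
    p ∈ S m ↔ (p.1 < m + 3 ∧ p.2 < 3) ∨ (p.1 < m + 2 ∧ p.2 = 3) := by
  simp only [S, Finset.mem_union, Finset.mem_product, Finset.mem_range,
    Finset.mem_singleton]

def enc (m : ℕ) : Fin (m+4) ⊕ (pathGraph (m+4)).edgeSet → ℕ := fun x =>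
  match x with
  | inl v => 2 * v.val
  | inr e => 2 * (Sym2.lift ⟨fun u v => min u.val v.val, fun u v => by
      simp [Nat.min_comm]⟩ (e : Sym2 (Fin (m+4)))) + 1

lemma enc_inl {m : ℕ} (v : Fin (m+4)) : enc m (inl v) = 2 * v.val := rfl

lemma enc_inr {m : ℕ} {i : ℕ} (hi : i + 1 < m + 4) :
    enc m (inr (ed m i)) = 2 * i + 1 := by
  simp only [enc, ed_coe i hi, Sym2.lift_mk]
  rw [vt_val i (by omega), vt_val (i+1) hi]
  omega

def code (m : ℕ) : Sym2 (Fin (m+4) ⊕ (pathGraph (m+4)).edgeSet) → ℕ :=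
  Sym2.lift ⟨fun x y => enc m x + enc m y, fun x y => by simp [Nat.add_comm]⟩

lemma code_F {m : ℕ} {p : ℕ × ℕ} (hp : p ∈ S m) :
    code m (F m p) = 4 * p.1 +
      (if p.2 = 0 then 2 else if p.2 = 1 then 1 else if p.2 = 2 then 3 else 4) := by
  obtain ⟨a, b⟩ := p
  rw [mem_S] at hp
  simp only at hp ⊢
  have ha3 : a + 1 < m + 4 := by omega
  have hb : b < 4 := by omega
  interval_cases b <;> simp only [F, code, Sym2.lift_mk] <;> norm_num
  · rw [enc_inl, enc_inl, vt_val a (by omega), vt_val (a+1) (by omega)]; ring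
  · rw [enc_inl, enc_inr (by omega : a + 1 < m + 4), vt_val a (by omega)]; ring
  · rw [enc_inl, enc_inr (by omega : a + 1 < m + 4), vt_val (a+1) (by omega)]; ring
  · rw [enc_inr (by omega : a + 1 < m + 4),
      enc_inr (by omega : (a+1) + 1 < m + 4)]; ring

lemma F_injOn (m : ℕ) : Set.InjOn (F m) (S m) := by
  intro p hp q hq hpq
  have hp' := mem_S.mp hp
  have hq' := mem_S.mp hq
  have hc : code m (F m p) = code m (F m q) := by rw [hpq]
  rw [code_F hp, code_F hq] at hc
  obtain ⟨a, b⟩ := p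
  obtain ⟨a', b'⟩ := q
  simp only at hp' hq' hc
  have hb : b < 4 := by omega
  have hb' : b' < 4 := by omega
  have : a = a' ∧ b = b' := by
    interval_cases b <;> interval_cases b' <;> simp_all <;> omega
  simp [this.1, this.2]

lemma F_mem {m : ℕ} {p : ℕ × ℕ} (hp : p ∈ S m) :
    F m p ∈ (pathGraph (m+4)).totalGraph.edgeFinset := by
  rw [mem_S] at hp
  obtain ⟨a, b⟩ := p
  simp only at hp
  have hb : b < 4 := by omega
  rw [SimpleGraph.mem_edgeFinset]
  interval_cases b <;> simp only [F] <;> norm_num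
  · rw [pathGraph_adj, vt_val a (by omega), vt_val (a+1) (by omega)]
    omega
  · rw [mem_ed a (by omega), vt_val a (by omega)]
    omega
  · rw [mem_ed a (by omega), vt_val (a+1) (by omega)]
    omega
  · constructor
    · intro hEq
      have := (ed_inj (by omega : a + 1 < m + 4)
        (by omega : (a+1) + 1 < m + 4)).mp hEq
      omega
    · refine ⟨vt m (a+1), ?_, ?_⟩
      · rw [mem_ed a (by omega), vt_val (a+1) (by omega)]
        omega
      · rw [mem_ed (a+1) (by omega), vt_val (a+1) (by omega)]
        omega

lemma vt_eq_of {m k : ℕ} (u : Fin (m+4)) (h : u.val = k) : vt m k = u := by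
  subst h; exact Fin.ext (vt_val _ u.isLt)

lemma F_surjOn (m : ℕ) :
    Set.SurjOn (F m) (S m) (pathGraph (m+4)).totalGraph.edgeFinset := by
  intro e he
  rw [Finset.mem_coe] at he
  induction e using Sym2.ind with
  | _ x y =>
    rw [SimpleGraph.mem_edgeFinset, SimpleGraph.mem_edgeSet] at he
    simp only [Set.mem_image, Finset.mem_coe]
    rcases x with u | e1 <;> rcases y with v | e2
    · rw [tg_adj_inl_inl, pathGraph_adj] at he
      rcases he with h | h
      · refine ⟨(u.val, 0), mem_S.mpr (by left; constructor <;> omega), ?_⟩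
        show s(inl (vt m u.val), inl (vt m (u.val+1))) = s(inl u, inl v)
        rw [vt_eq_of u rfl, vt_eq_of v h.symm]
      · refine ⟨(v.val, 0), mem_S.mpr (by left; constructor <;> omega), ?_⟩
        show s(inl (vt m v.val), inl (vt m (v.val+1))) = s(inl u, inl v)
        rw [vt_eq_of v rfl, vt_eq_of u h.symm, Sym2.eq_swap]
    · obtain ⟨i, hi, rfl⟩ := ed_surj e2
      rw [tg_adj_inl_inr, mem_ed i hi] at he
      rcases he with h | h
      · refine ⟨(i, 1), mem_S.mpr (by left; constructor <;> omega), ?_⟩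
        show s(inl (vt m i), inr (ed m i)) = s(inl u, inr (ed m i))
        rw [vt_eq_of u h]
      · refine ⟨(i, 2), mem_S.mpr (by left; constructor <;> omega), ?_⟩
        show s(inl (vt m (i+1)), inr (ed m i)) = s(inl u, inr (ed m i))
        rw [vt_eq_of u h]
    · obtain ⟨i, hi, rfl⟩ := ed_surj e1
      rw [tg_adj_inr_inl, mem_ed i hi] at he
      rcases he with h | h
      · refine ⟨(i, 1), mem_S.mpr (by left; constructor <;> omega), ?_⟩
        show s(inl (vt m i), inr (ed m i)) = s(inr (ed m i), inl v)
        rw [vt_eq_of v h, Sym2.eq_swap]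
      · refine ⟨(i, 2), mem_S.mpr (by left; constructor <;> omega), ?_⟩
        show s(inl (vt m (i+1)), inr (ed m i)) = s(inr (ed m i), inl v)
        rw [vt_eq_of v h, Sym2.eq_swap]
    · obtain ⟨i, hi, rfl⟩ := ed_surj e1
      obtain ⟨j, hj, rfl⟩ := ed_surj e2
      rw [ed_adj hi hj] at he
      have hij : i + 1 = j ∨ j + 1 = i := by omega
      rcases hij with h | h
      · refine ⟨(i, 3), mem_S.mpr (by right; constructor <;> omega), ?_⟩
        show s(inr (ed m i), inr (ed m (i+1))) = s(inr (ed m i), inr (ed m j))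
        rw [h]
      · refine ⟨(j, 3), mem_S.mpr (by right; constructor <;> omega), ?_⟩
        show s(inr (ed m j), inr (ed m (j+1))) = s(inr (ed m i), inr (ed m j))
        rw [h, Sym2.eq_swap]

/-! ### Weights -/

def dvN (m a : ℕ) : ℕ := if a = 0 ∨ a = m + 3 then 2 else 4
def deN (m a : ℕ) : ℕ := if a = 0 ∨ a = m + 2 then 3 else 4

lemma deg_vt' {m a : ℕ} (ha : a < m + 4) :
    (pathGraph (m+4)).totalGraph.degree (inl (vt m a)) = dvN m a := by
  rw [deg_vt, vt_val a ha]; rfl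

lemma deg_ed' {m a : ℕ} (ha : a + 1 < m + 4) :
    (pathGraph (m+4)).totalGraph.degree (inr (ed m a)) = deN m a := by
  rw [deg_ed ha]; rfl

noncomputable def wv (m : ℕ) : ℕ × ℕ → ℝ
  | (a, 0) => 2 / ((dvN m a : ℝ) + dvN m (a+1))
  | (a, 1) => 2 / ((dvN m a : ℝ) + deN m a)
  | (a, 2) => 2 / ((dvN m (a+1) : ℝ) + deN m a)
  | (a, _) => 2 / ((deN m a : ℝ) + deN m (a+1))

lemma sum_peel (f : ℕ → ℝ) (k : ℕ) (c : ℝ) (hmid : ∀ a, 1 ≤ a → a ≤ k → f a = c) :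
    ∑ a ∈ Finset.range (k + 2), f a = f 0 + k * c + f (k + 1) := by
  rw [Finset.sum_range_succ, Finset.sum_range_succ']
  have : ∑ i ∈ Finset.range k, f (i + 1) = k * c := by
    rw [Finset.sum_congr rfl fun i hi =>
      hmid (i+1) (by omega) (by have := Finset.mem_range.mp hi; omega)]
    simp [Finset.sum_const, nsmul_eq_mul]
  rw [this]; ring

lemma key (m : ℕ) :
    (pathGraph (m+4)).totalGraph.harmonicIndex = ((m : ℝ) + 4) - 269 / 420 := by
  rw [SimpleGraph.harmonicIndex]
  rw [← Finset.sum_nbij (F m) (fun p hp => F_mem hp) (F_injOn m) (F_surjOn m)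
    (g := fun e => Sym2.lift ⟨fun u v => 2 / (((pathGraph (m+4)).totalGraph.degree u : ℝ)
        + ((pathGraph (m+4)).totalGraph.degree v : ℝ)),
      fun u v => by simp [add_comm]⟩ e) (f := wv m) ?_]
  · -- compute ∑ p ∈ S m, wv m p
    rw [S, Finset.sum_union ?hd]
    case hd =>
      rw [Finset.disjoint_left]
      intro p h1 h2
      simp only [Finset.mem_product, Finset.mem_range, Finset.mem_singleton] at h1 h2
      omega
    rw [Finset.sum_product, Finset.sum_product]
    have hr3 : ∀ a : ℕ, ∑ b ∈ Finset.range 3, wv m (a, b) =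
        wv m (a, 0) + wv m (a, 1) + wv m (a, 2) := by
      intro a
      rw [show (3:ℕ) = 0+1+1+1 from rfl, Finset.sum_range_succ,
        Finset.sum_range_succ, Finset.sum_range_succ, Finset.sum_range_zero]
      ring
    rw [Finset.sum_congr rfl fun a _ => hr3 a]
    rw [Finset.sum_add_distrib, Finset.sum_add_distrib]
    simp only [Finset.sum_singleton]
    have hd2 : ∀ a, ¬(a = 0 ∨ a = m + 3) → dvN m a = 4 := fun a h => if_neg h
    have hd4 : ∀ a, ¬(a = 0 ∨ a = m + 2) → deN m a = 4 := fun a h => if_neg h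
    have t0 : ∑ a ∈ Finset.range (m+3), wv m (a, 0) = 1/3 + (m+1) * (1/4) + 1/3 := by
      rw [show m+3 = (m+1)+2 from rfl, sum_peel _ _ (1/4)
        (fun a h1 h2 => by
          simp only [wv, hd2 a (by omega), hd2 (a+1) (by omega)]; norm_num)]
      rw [show wv m (0, 0) = 1/3 by
          simp only [wv, dvN, if_pos (Or.inl rfl), hd2 1 (by omega)]; norm_num,
        show wv m ((m+1)+1, 0) = 1/3 by
          simp only [wv, hd2 (m+1+1) (by omega), dvN, if_pos (Or.inr (by omega : m+1+1+1 = m+3))]; norm_num]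
      push_cast; ring
    have t1 : ∑ a ∈ Finset.range (m+3), wv m (a, 1) = 2/5 + (m+1) * (1/4) + 2/7 := by
      rw [show m+3 = (m+1)+2 from rfl, sum_peel _ _ (1/4)
        (fun a h1 h2 => by
          simp only [wv, hd2 a (by omega), hd4 a (by omega)]; norm_num)]
      rw [show wv m (0, 1) = 2/5 by
          simp only [wv, dvN, deN, if_pos (Or.inl rfl)]; norm_num,
        show wv m ((m+1)+1, 1) = 2/7 by
          simp only [wv, hd2 (m+1+1) (by omega), deN,
            if_pos (Or.inr (by omega : m+1+1 = m+2))]; norm_num]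
      push_cast; ring
    have t2 : ∑ a ∈ Finset.range (m+3), wv m (a, 2) = 2/7 + (m+1) * (1/4) + 2/5 := by
      rw [show m+3 = (m+1)+2 from rfl, sum_peel _ _ (1/4)
        (fun a h1 h2 => by
          simp only [wv, hd2 (a+1) (by omega), hd4 a (by omega)]; norm_num)]
      rw [show wv m (0, 2) = 2/7 by
          simp only [wv, hd2 1 (by omega), deN, if_pos (Or.inl rfl)]; norm_num,
        show wv m ((m+1)+1, 2) = 2/5 by
          simp only [wv, dvN, if_pos (Or.inr (by omega : m+1+1+1 = m+3)), deN,
            if_pos (Or.inr (by omega : m+1+1 = m+2))]; norm_num]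
      push_cast; ring
    have t3 : ∑ a ∈ Finset.range (m+2), wv m (a, 3) = 2/7 + m * (1/4) + 2/7 := by
      rw [sum_peel _ _ (1/4)
        (fun a h1 h2 => by
          simp only [wv, hd4 a (by omega), hd4 (a+1) (by omega)]; norm_num)]
      rw [show wv m (0, 3) = 2/7 by
          simp only [wv, deN, if_pos (Or.inl rfl), hd4 1 (by omega)]; norm_num,
        show wv m (m+1, 3) = 2/7 by
          simp only [wv, hd4 (m+1) (by omega), deN,
            if_pos (Or.inr (by omega : m+1+1 = m+2))]; norm_num]
      try (push_cast; ring)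
    rw [t0, t1, t2, t3]
    ring
  · -- weights agree
    intro p hp
    rw [mem_S] at hp
    obtain ⟨a, b⟩ := p
    simp only at hp
    have hb : b < 4 := by omega
    have ha1 : a < m + 4 := by omega
    have ha2 : a + 1 < m + 4 := by omega
    interval_cases b
    · rw [show F m (a, 0) = s(inl (vt m a), inl (vt m (a+1))) from rfl]
      simp only [Sym2.lift_mk]
      rw [deg_vt' ha1, deg_vt' (by omega)]
      rfl
    · rw [show F m (a, 1) = s(inl (vt m a), inr (ed m a)) from rfl]
      simp only [Sym2.lift_mk]
      rw [deg_vt' ha1, deg_ed' ha2]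
      rfl
    · rw [show F m (a, 2) = s(inl (vt m (a+1)), inr (ed m a)) from rfl]
      simp only [Sym2.lift_mk]
      rw [deg_vt' (by omega), deg_ed' ha2]
      rfl
    · rw [show F m (a, 3) = s(inr (ed m a), inr (ed m (a+1))) from rfl]
      simp only [Sym2.lift_mk]
      rw [deg_ed' ha2, deg_ed' (by omega : (a+1)+1 < m+4)]
      rfl

end TPaux

/-- For the path graph `P_n` on `n ≥ 4` vertices, `H(T(P_n)) = n - 269/420`. -/
theorem harmonicIndex_totalGraph_pathGraph (n : ℕ) (hn : 4 ≤ n) :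
    (SimpleGraph.pathGraph n).totalGraph.harmonicIndex = (n : ℝ) - 269 / 420 := by
  obtain ⟨m, rfl⟩ : ∃ m, n = m + 4 := ⟨n - 4, by omega⟩
  rw [TPaux.key m]
  push_cast
  ring
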